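/- Let m ≥ 2 be an integer, θ = exp(2πi/m) ∈ ℂ, and l' an integer with 1 ≤ l' ≤ m − 1. Let P₊, Z₊, N₊, P₋, Z₋, N₋, N be nonnegative integers with P₊ + Z₊ + N₊ = N and P₋ + Z₋ + N₋ = N, and let d be an integer. Then, as complex numbers, d + N + ∑_{k=1}^{m−1} [ (P₊·θ^{l'k} + Z₊ + N₊·θ^{−l'k})/(1 − θ^{−k}) + (P₋·θ^{l'k} + Z₋ + N₋·θ^{−l'k})/(1 − θ^{k}) ] = d + m·N − m·(P₋ + N₊) + l'·(P₋ + N₊ − P₊ − N₋). -/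

import Mathlib

open Finset

lemma ab_key {θ : ℂ} {m : ℕ} (hθm : θ ^ m = 1) {a b : ℕ} (h : m ∣ a + b) :
    θ ^ a = (θ ^ b)⁻¹ := by
  obtain ⟨q, hq⟩ := h
  have : θ ^ a * θ ^ b = 1 := by
    rw [← pow_add, hq, pow_mul, hθm, one_pow]
  exact eq_inv_of_mul_eq_one_left this

lemma ab_reflect (m : ℕ) (f : ℕ → ℂ) :
    ∑ k ∈ Icc 1 (m - 1), f (m - k) = ∑ k ∈ Icc 1 (m - 1), f k := by
  apply Finset.sum_nbij' (fun k => m - k) (fun k => m - k) <;>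
    simp only [Finset.mem_Icc] <;> intros <;> first | trivial | omega

lemma ab_sum_pow {θ : ℂ} {m : ℕ} (hθm : θ ^ m = 1) (hm : 1 ≤ m) {a : ℕ}
    (ha : θ ^ a ≠ 1) : ∑ k ∈ Icc 1 (m - 1), θ ^ (a * k) = -1 := by
  have h1 : ∀ k, θ ^ (a * k) = (θ ^ a) ^ k := fun k => by rw [pow_mul]
  have h2 : Icc 1 (m - 1) = Ico 1 m := by
    ext x; simp only [Finset.mem_Icc, Finset.mem_Ico]; omega
  have h3 : ∑ k ∈ range m, (θ ^ a) ^ k = 0 := by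
    rw [geom_sum_eq ha, ← pow_mul, mul_comm, pow_mul, hθm, one_pow, sub_self, zero_div]
  have h4 : ∑ k ∈ Ico 0 m, (θ ^ a) ^ k = ∑ k ∈ Ico 0 1, (θ ^ a) ^ k + ∑ k ∈ Ico 1 m, (θ ^ a) ^ k :=
    (Finset.sum_Ico_consecutive _ (by omega) hm).symm
  simp only [h1, h2]
  rw [← Finset.range_eq_Ico] at h4
  simp [h3] at h4
  linear_combination -h4

lemma ab_inv_frac {x : ℂ} (h0 : x ≠ 0) (h1 : 1 - x ≠ 0) (h2 : 1 - x⁻¹ ≠ 0) (c : ℂ) :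
    c / (1 - x⁻¹) = c - c / (1 - x) := by
  have hx1 : x - 1 ≠ 0 := fun h => h1 (by linear_combination -h)
  have e : 1 - x⁻¹ = (x - 1) / x := by field_simp
  rw [e, div_div_eq_mul_div, eq_sub_iff_add_eq, div_add_div _ _ hx1 h1,
    div_eq_iff (mul_ne_zero hx1 h1)]
  ring

noncomputable def absum (θ : ℂ) (m a : ℕ) : ℂ :=
  ∑ k ∈ Icc 1 (m - 1), θ ^ (a * k) / (1 - θ ^ k)

lemma absum_zero {θ : ℂ} {m : ℕ} (hθm : θ ^ m = 1) (hm : 2 ≤ m) (hθ0 : θ ≠ 0)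
    (hne : ∀ k, 1 ≤ k → k ≤ m - 1 → 1 - θ ^ k ≠ 0) :
    absum θ m 0 = ((m : ℂ) - 1) / 2 := by
  have hrefl := ab_reflect m (fun k => 1 / (1 - θ ^ k))
  have h2 : absum θ m 0 + absum θ m 0 = (m : ℂ) - 1 := by
    unfold absum
    nth_rewrite 2 [← ab_reflect m (fun k => θ ^ (0 * k) / (1 - θ ^ k))]
    rw [← Finset.sum_add_distrib]
    have : ∀ k ∈ Icc 1 (m - 1),
        θ ^ (0 * k) / (1 - θ ^ k) + θ ^ (0 * (m - k)) / (1 - θ ^ (m - k)) = 1 := by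
      intro k hk
      simp only [Finset.mem_Icc] at hk
      have hxk : θ ^ (m - k) = (θ ^ k)⁻¹ := ab_key hθm ⟨1, by omega⟩
      have h1 : 1 - θ ^ k ≠ 0 := hne k hk.1 hk.2
      have h0 : θ ^ k ≠ 0 := pow_ne_zero _ hθ0
      rw [hxk]
      simp only [zero_mul, pow_zero]
      have h1' : 1 - (θ ^ k)⁻¹ ≠ 0 := by
        rw [sub_ne_zero] at h1 ⊢
        intro h; apply h1; rw [← inv_inv (θ ^ k), ← h, inv_one]
      rw [ab_inv_frac h0 h1 h1' 1]
      ring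
    rw [Finset.sum_congr rfl this, Finset.sum_const, Nat.card_Icc]
    have : ((m - 1 + 1 - 1 : ℕ) : ℂ) = (m : ℂ) - 1 := by
      push_cast [Nat.sub_add_cancel (by omega : 1 ≤ m), Nat.cast_sub (by omega : 1 ≤ m)]
      ring
    simp only [this, nsmul_eq_mul]
    ring
  linear_combination h2 / 2

lemma absum_diff {θ : ℂ} {m : ℕ}
    (hne : ∀ k, 1 ≤ k → k ≤ m - 1 → 1 - θ ^ k ≠ 0) (a : ℕ) :
    absum θ m a - absum θ m (a + 1) = ∑ k ∈ Icc 1 (m - 1), θ ^ (a * k) := by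
  unfold absum
  rw [← Finset.sum_sub_distrib]
  apply Finset.sum_congr rfl
  intro k hk
  simp only [Finset.mem_Icc] at hk
  have h1 : 1 - θ ^ k ≠ 0 := hne k hk.1 hk.2
  rw [div_sub_div_same, show (a + 1) * k = a * k + k by ring, pow_add,
    div_eq_iff h1]
  ring

lemma absum_eq {θ : ℂ} {m : ℕ} (hprim : IsPrimitiveRoot θ m) (hm : 2 ≤ m) (hθ0 : θ ≠ 0)
    (hne : ∀ k, 1 ≤ k → k ≤ m - 1 → 1 - θ ^ k ≠ 0) :
    ∀ a, 1 ≤ a → a ≤ m - 1 → absum θ m a = ((m : ℂ) - 1) / 2 - m + a := by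
  have hθm : θ ^ m = 1 := hprim.pow_eq_one
  intro a
  induction a with
  | zero => omega
  | succ n ih =>
    intro _ h2
    have hd := absum_diff hne n
    rcases Nat.eq_zero_or_pos n with hn | hn
    · subst hn
      have hs : ∑ k ∈ Icc 1 (m - 1), θ ^ (0 * k) = (m : ℂ) - 1 := by
        simp only [zero_mul, pow_zero, Finset.sum_const, Nat.card_Icc, nsmul_eq_mul, mul_one]
        rw [show m - 1 + 1 - 1 = m - 1 by omega, Nat.cast_sub (by omega : 1 ≤ m), Nat.cast_one]
      rw [absum_zero hθm hm hθ0 hne, hs] at hd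
      push_cast
      linear_combination -hd
    · have hih := ih hn (by omega)
      have hs : ∑ k ∈ Icc 1 (m - 1), θ ^ (n * k) = -1 :=
        ab_sum_pow hθm (by omega) (hprim.pow_ne_one_of_pos_of_lt (by omega) (by omega))
      rw [hih, hs] at hd
      push_cast
      linear_combination -hd



/-- Atiyah–Bott fixed point computation at the heart of Theorem 4.7 of the paper.
Let `m ≥ 2`, `θ = exp(2πi/m)`, `1 ≤ l' ≤ m − 1`, let `P₊ + Z₊ + N₊ = N` and
`P₋ + Z₋ + N₋ = N` be nonnegative integers and `d` an integer.  Then, in `ℂ`,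
`d + N + ∑_{k=1}^{m−1} [ (P₊·θ^{l'k} + Z₊ + N₊·θ^{−l'k})/(1 − θ^{−k})
  + (P₋·θ^{l'k} + Z₋ + N₋·θ^{−l'k})/(1 − θ^{k}) ]
  = d + m·N − m·(P₋ + N₊) + l'·(P₋ + N₊ − P₊ − N₋)`. -/
theorem atiyah_bott_weight_sum
    (m l' : ℕ) (hm : 2 ≤ m) (hl1 : 1 ≤ l') (hl2 : l' ≤ m - 1)
    (θ : ℂ) (hθ : θ = Complex.exp (2 * Real.pi * Complex.I / m))
    (Pp Zp Np Pm Zm Nm N : ℕ) (d : ℤ)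
    (hp : Pp + Zp + Np = N) (hn : Pm + Zm + Nm = N) :
    (d : ℂ) + N +
      ∑ k ∈ Finset.Icc 1 (m - 1),
        (((Pp : ℂ) * θ ^ (l' * k) + (Zp : ℂ) + (Np : ℂ) * θ ^ (-(l' * k : ℤ))) /
            (1 - θ ^ (-(k : ℤ))) +
          ((Pm : ℂ) * θ ^ (l' * k) + (Zm : ℂ) + (Nm : ℂ) * θ ^ (-(l' * k : ℤ))) /
            (1 - θ ^ (k : ℕ))) =
      (d : ℂ) + (m : ℂ) * N - (m : ℂ) * ((Pm : ℂ) + Np) +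
        (l' : ℂ) * ((Pm : ℂ) + (Np : ℂ) - (Pp : ℂ) - (Nm : ℂ)) := by
  have hprim : IsPrimitiveRoot θ m := hθ ▸ Complex.isPrimitiveRoot_exp m (by omega)
  have hθm : θ ^ m = 1 := hprim.pow_eq_one
  have hθ0 : θ ≠ 0 := fun h => by
    rw [h, zero_pow (by omega : m ≠ 0)] at hθm; exact zero_ne_one hθm
  have hne : ∀ k, 1 ≤ k → k ≤ m - 1 → 1 - θ ^ k ≠ 0 := fun k h1 h2 =>
    sub_ne_zero.mpr (Ne.symm (hprim.pow_ne_one_of_pos_of_lt (by omega) (by omega)))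
  have hsum : ∀ k ∈ Icc 1 (m - 1),
      (((Pp : ℂ) * θ ^ (l' * k) + (Zp : ℂ) + (Np : ℂ) * θ ^ (-(l' * k : ℤ))) /
            (1 - θ ^ (-(k : ℤ))) +
          ((Pm : ℂ) * θ ^ (l' * k) + (Zm : ℂ) + (Nm : ℂ) * θ ^ (-(l' * k : ℤ))) /
            (1 - θ ^ (k : ℕ)))
      = ((Pp : ℂ) * θ ^ (l' * k) + (Zp : ℂ) * 1 + (Np : ℂ) * θ ^ ((m - l') * k))
        + (((Pm : ℂ) - Pp) * (θ ^ (l' * k) / (1 - θ ^ k))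
          + ((Zm : ℂ) - Zp) * (θ ^ (0 * k) / (1 - θ ^ k))
          + ((Nm : ℂ) - Np) * (θ ^ ((m - l') * k) / (1 - θ ^ k))) := by
    intro k hk
    simp only [Finset.mem_Icc] at hk
    have e1 : θ ^ (-(l' * k : ℤ)) = (θ ^ (l' * k))⁻¹ := by
      rw [zpow_neg, ← Nat.cast_mul, zpow_natCast]
    have e2 : θ ^ (-(k : ℤ)) = (θ ^ k)⁻¹ := by rw [zpow_neg, zpow_natCast]
    have e3 : θ ^ ((m - l') * k) = (θ ^ (l' * k))⁻¹ :=
      ab_key hθm ⟨k, by rw [← add_mul, Nat.sub_add_cancel (by omega)]⟩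
    have h1 : 1 - θ ^ k ≠ 0 := hne k hk.1 hk.2
    have h0 : θ ^ k ≠ 0 := pow_ne_zero _ hθ0
    have hv0 : θ ^ (l' * k) ≠ 0 := pow_ne_zero _ hθ0
    have h1' : 1 - (θ ^ k)⁻¹ ≠ 0 := by
      rw [sub_ne_zero] at h1 ⊢
      intro h; apply h1; rw [← inv_inv (θ ^ k), ← h, inv_one]
    rw [e1, e2, e3, ab_inv_frac h0 h1 h1']
    simp only [zero_mul, pow_zero]
    field_simp
    ring
  rw [Finset.sum_congr rfl hsum]
  simp only [Finset.sum_add_distrib, ← Finset.mul_sum, Finset.sum_const, Nat.card_Icc,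
    nsmul_eq_mul, mul_one]
  have S1 : ∑ k ∈ Icc 1 (m - 1), θ ^ (l' * k) = -1 :=
    ab_sum_pow hθm (by omega) (hprim.pow_ne_one_of_pos_of_lt (by omega) (by omega))
  have S2 : ∑ k ∈ Icc 1 (m - 1), θ ^ ((m - l') * k) = -1 :=
    ab_sum_pow hθm (by omega) (hprim.pow_ne_one_of_pos_of_lt (by omega) (by omega))
  have G0 : ∑ k ∈ Icc 1 (m - 1), θ ^ (0 * k) / (1 - θ ^ k) = ((m : ℂ) - 1) / 2 :=
    absum_zero hθm hm hθ0 hne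
  have G1 : ∑ k ∈ Icc 1 (m - 1), θ ^ (l' * k) / (1 - θ ^ k)
      = ((m : ℂ) - 1) / 2 - m + l' := absum_eq hprim hm hθ0 hne l' hl1 hl2
  have G2 : ∑ k ∈ Icc 1 (m - 1), θ ^ ((m - l') * k) / (1 - θ ^ k)
      = ((m : ℂ) - 1) / 2 - m + ((m : ℂ) - l') := by
    have := absum_eq hprim hm hθ0 hne (m - l') (by omega) (by omega)
    unfold absum at this
    rw [this, Nat.cast_sub (by omega : l' ≤ m)]
  rw [S1, S2, G0, G1, G2, show m - 1 + 1 - 1 = m - 1 by omega,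
    Nat.cast_sub (by omega : 1 ≤ m), Nat.cast_one]
  have hZp : (Zp : ℂ) = (N : ℂ) - Pp - Np := by
    have : (Pp : ℂ) + Zp + Np = N := by exact_mod_cast congrArg (Nat.cast : ℕ → ℂ) hp
    linear_combination this
  have hZm : (Zm : ℂ) = (N : ℂ) - Pm - Nm := by
    have : (Pm : ℂ) + Zm + Nm = N := by exact_mod_cast congrArg (Nat.cast : ℕ → ℂ) hn
    linear_combination this
  rw [hZp, hZm]
  ring
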